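/- In a 1-dimensional system with finite agent set V, positions x : V → ℝ, influence edges E_I, and movements m(v) = (∑_{u ∈ N(v)} (x_u - x_v)) / |N(v)|, the total weighted movement satisfies ∑_{v ∈ V} |N(v)|·|m(v)| ≥ 2λ, where λ is the length |x_u - x_w| of a longest edge {u,w} ∈ E_I. -/

import Mathlib

private lemma cancel_sum {V : Type*} [Fintype V] [DecidableEq V]
    (G : SimpleGraph V) [DecidableRel G.Adj] (x : V → ℝ) (L : Finset V) :
    ∑ v ∈ L, ∑ t ∈ (G.neighborFinset v).filter (· ∈ L), (x t - x v) = 0 := by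
  rw [Finset.sum_sigma']
  refine Finset.sum_involution (fun a _ => ⟨a.2, a.1⟩) ?_ ?_ ?_ ?_
  · intro a ha; ring
  · intro a ha hne
    intro h
    apply hne
    have : a.2 = a.1 := congrArg Sigma.fst h
    rw [this]; ring
  · intro a ha
    rw [Finset.mem_sigma] at ha ⊢
    obtain ⟨h1, h2⟩ := ha
    rw [Finset.mem_filter, SimpleGraph.mem_neighborFinset] at h2 ⊢
    exact ⟨h2.2, h2.1.symm, h1⟩
  · intro a ha; rfl

private lemma key_aux {V : Type*} [Fintype V] [DecidableEq V]
    (G : SimpleGraph V) [DecidableRel G.Adj] (x : V → ℝ)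
    (u w : V) (huw : G.Adj u w) (hlt : x u < x w) :
    ∑ v, |∑ t ∈ insert v (G.neighborFinset v), (x t - x v)| ≥ 2 * (x w - x u) := by
  set c : ℝ := (x u + x w) / 2 with hc
  set L : Finset V := Finset.univ.filter (fun v => x v ≤ c) with hL
  set R : Finset V := Finset.univ.filter (fun v => ¬ x v ≤ c) with hR
  have huL : u ∈ L := by simp [hL, hc]; linarith
  have hwR : w ∈ R := by simp [hR, hc]; linarith
  have hwnL : w ∉ L := by simp [hL, hc]; linarith
  have hunR : u ∉ R := by simp [hR, hc]; linarith
  have hS : ∀ v : V, ∑ t ∈ insert v (G.neighborFinset v), (x t - x v)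
      = ∑ t ∈ G.neighborFinset v, (x t - x v) := by
    intro v
    rw [Finset.sum_insert (G.notMem_neighborFinset_self v), sub_self, zero_add]
  -- split each neighbor sum by membership in L
  have hsplit : ∀ v : V, ∑ t ∈ G.neighborFinset v, (x t - x v)
      = (∑ t ∈ (G.neighborFinset v).filter (· ∈ L), (x t - x v))
        + ∑ t ∈ (G.neighborFinset v).filter (· ∉ L), (x t - x v) := by
    intro v
    exact (Finset.sum_filter_add_sum_filter_not _ _ _).symm
  have hsplitR : ∀ v : V, ∑ t ∈ G.neighborFinset v, (x t - x v)
      = (∑ t ∈ (G.neighborFinset v).filter (· ∈ R), (x t - x v))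
        + ∑ t ∈ (G.neighborFinset v).filter (· ∉ R), (x t - x v) := by
    intro v
    exact (Finset.sum_filter_add_sum_filter_not _ _ _).symm
  -- lower bound on the L-side sum
  have hLbound : ∑ v ∈ L, ∑ t ∈ G.neighborFinset v, (x t - x v) ≥ x w - x u := by
    have hcan := cancel_sum G x L
    have : ∑ v ∈ L, ∑ t ∈ G.neighborFinset v, (x t - x v)
        = ∑ v ∈ L, ∑ t ∈ (G.neighborFinset v).filter (· ∉ L), (x t - x v) := by
      calc ∑ v ∈ L, ∑ t ∈ G.neighborFinset v, (x t - x v)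
          = ∑ v ∈ L, ((∑ t ∈ (G.neighborFinset v).filter (· ∈ L), (x t - x v))
            + ∑ t ∈ (G.neighborFinset v).filter (· ∉ L), (x t - x v)) := by
              exact Finset.sum_congr rfl (fun v _ => hsplit v)
        _ = _ := by rw [Finset.sum_add_distrib, hcan, zero_add]
    rw [this]
    have hnn : ∀ v ∈ L, (0:ℝ) ≤ ∑ t ∈ (G.neighborFinset v).filter (· ∉ L), (x t - x v) := by
      intro v hv
      apply Finset.sum_nonneg
      intro t ht
      rw [Finset.mem_filter] at ht
      have h1 : x v ≤ c := by simpa [hL] using hv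
      have h2 : ¬ x t ≤ c := by
        have := ht.2
        simpa [hL] using this
      linarith [not_le.mp h2]
    have hinner : x w - x u ≤ ∑ t ∈ (G.neighborFinset u).filter (· ∉ L), (x t - x u) := by
      apply Finset.single_le_sum (f := fun t => x t - x u)
      · intro t ht
        rw [Finset.mem_filter] at ht
        have h1 : x u ≤ c := by simpa [hL] using huL
        have h2 := not_le.mp (by simpa [hL] using ht.2 : ¬ x t ≤ c)
        linarith
      · rw [Finset.mem_filter, SimpleGraph.mem_neighborFinset]
        exact ⟨huw, hwnL⟩
    calc x w - x u ≤ ∑ t ∈ (G.neighborFinset u).filter (· ∉ L), (x t - x u) := hinner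
      _ ≤ ∑ v ∈ L, ∑ t ∈ (G.neighborFinset v).filter (· ∉ L), (x t - x v) :=
          Finset.single_le_sum hnn huL
  -- upper bound on the R-side sum
  have hRbound : ∑ v ∈ R, ∑ t ∈ G.neighborFinset v, (x t - x v) ≤ -(x w - x u) := by
    have hcan := cancel_sum G x R
    have heq : ∑ v ∈ R, ∑ t ∈ G.neighborFinset v, (x t - x v)
        = ∑ v ∈ R, ∑ t ∈ (G.neighborFinset v).filter (· ∉ R), (x t - x v) := by
      calc ∑ v ∈ R, ∑ t ∈ G.neighborFinset v, (x t - x v)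
          = ∑ v ∈ R, ((∑ t ∈ (G.neighborFinset v).filter (· ∈ R), (x t - x v))
            + ∑ t ∈ (G.neighborFinset v).filter (· ∉ R), (x t - x v)) := by
              exact Finset.sum_congr rfl (fun v _ => hsplitR v)
        _ = _ := by rw [Finset.sum_add_distrib, hcan, zero_add]
    rw [heq]
    have hnp : ∀ v ∈ R, ∑ t ∈ (G.neighborFinset v).filter (· ∉ R), (x t - x v) ≤ 0 := by
      intro v hv
      apply Finset.sum_nonpos
      intro t ht
      rw [Finset.mem_filter] at ht
      have h1 : ¬ x v ≤ c := by simpa [hR] using hv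
      have h2 : x t ≤ c := by
        have := ht.2
        simp only [hR, Finset.mem_filter, Finset.mem_univ, true_and, not_not] at this
        exact this
      linarith [not_le.mp h1]
    have hinner : ∑ t ∈ (G.neighborFinset w).filter (· ∉ R), (x t - x w) ≤ x u - x w := by
      have hmem : u ∈ (G.neighborFinset w).filter (· ∉ R) := by
        rw [Finset.mem_filter, SimpleGraph.mem_neighborFinset]
        exact ⟨huw.symm, hunR⟩
      have hnn : ∀ t ∈ (G.neighborFinset w).filter (· ∉ R), (0:ℝ) ≤ -(x t - x w) := by
        intro t ht
        rw [Finset.mem_filter] at ht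
        have h1 : ¬ x w ≤ c := by simpa [hR] using hwR
        have h2 : x t ≤ c := by
          have := ht.2
          simp only [hR, Finset.mem_filter, Finset.mem_univ, true_and, not_not] at this
          exact this
        have := not_le.mp h1
        simp only [neg_sub]
        linarith
      have := Finset.single_le_sum (f := fun t => -(x t - x w)) hnn hmem
      rw [Finset.sum_neg_distrib] at this
      linarith
    have houter : ∑ v ∈ R, ∑ t ∈ (G.neighborFinset v).filter (· ∉ R), (x t - x v)
        ≤ ∑ t ∈ (G.neighborFinset w).filter (· ∉ R), (x t - x w) := by
      have := Finset.single_le_sum (f := fun v => -(∑ t ∈ (G.neighborFinset v).filter (· ∉ R), (x t - x v)))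
        (s := R) (fun v hv => by simpa using hnp v hv) hwR
      rw [Finset.sum_neg_distrib] at this
      linarith
    linarith
  -- assemble
  have hsplitV : ∑ v, |∑ t ∈ insert v (G.neighborFinset v), (x t - x v)|
      = (∑ v ∈ L, |∑ t ∈ G.neighborFinset v, (x t - x v)|)
        + ∑ v ∈ R, |∑ t ∈ G.neighborFinset v, (x t - x v)| := by
    simp only [hS]
    exact (Finset.sum_filter_add_sum_filter_not Finset.univ (fun v => x v ≤ c) _).symm
  rw [hsplitV]
  have h1 : ∑ v ∈ L, |∑ t ∈ G.neighborFinset v, (x t - x v)| ≥ x w - x u := by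
    calc x w - x u ≤ ∑ v ∈ L, ∑ t ∈ G.neighborFinset v, (x t - x v) := hLbound
      _ ≤ |∑ v ∈ L, ∑ t ∈ G.neighborFinset v, (x t - x v)| := le_abs_self _
      _ ≤ ∑ v ∈ L, |∑ t ∈ G.neighborFinset v, (x t - x v)| := Finset.abs_sum_le_sum_abs _ _
  have h2 : ∑ v ∈ R, |∑ t ∈ G.neighborFinset v, (x t - x v)| ≥ x w - x u := by
    calc x w - x u ≤ -(∑ v ∈ R, ∑ t ∈ G.neighborFinset v, (x t - x v)) := by linarith
      _ ≤ |∑ v ∈ R, ∑ t ∈ G.neighborFinset v, (x t - x v)| := neg_le_abs _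
      _ ≤ ∑ v ∈ R, |∑ t ∈ G.neighborFinset v, (x t - x v)| := Finset.abs_sum_le_sum_abs _ _
  linarith

/-- In a 1-dimensional system, the total weighted movement
`∑_v |N(v)|·|m(v)|` is at least twice the length `λ = |x u − x w|` of a longest
influence edge `{u,w}`, where `N(v) = {v} ∪ neighbors of v` and
`m(v) = (∑_{u ∈ N(v)} (x u − x v))/|N(v)|`. -/
theorem summed_movement_ge_twice_longest_edge
    {V : Type*} [Fintype V] [DecidableEq V]
    (G : SimpleGraph V) [DecidableRel G.Adj] (x : V → ℝ)
    (u w : V) (huw : G.Adj u w)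
    (hmax : ∀ a b, G.Adj a b → |x a - x b| ≤ |x u - x w|) :
    let N : V → Finset V := fun v => insert v (G.neighborFinset v)
    let m : V → ℝ := fun v => (∑ u ∈ N v, (x u - x v)) / ((N v).card : ℝ)
    ∑ v, ((N v).card : ℝ) * |m v| ≥ 2 * |x u - x w| := by
  intro N m
  have hcard : ∀ v, (0:ℝ) < ((N v).card : ℝ) := by
    intro v
    have : 0 < (N v).card := Finset.card_pos.mpr ⟨v, Finset.mem_insert_self v _⟩
    exact_mod_cast this
  have hLHS : ∑ v, ((N v).card : ℝ) * |m v|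
      = ∑ v, |∑ t ∈ insert v (G.neighborFinset v), (x t - x v)| := by
    apply Finset.sum_congr rfl
    intro v _
    have hne : ((N v).card : ℝ) ≠ 0 := ne_of_gt (hcard v)
    have habs : |m v| = |∑ t ∈ N v, (x t - x v)| / ((N v).card : ℝ) := by
      simp only [m]
      rw [abs_div, abs_of_nonneg (hcard v).le]
    rw [habs, mul_comm, div_mul_cancel₀ _ hne]
  rw [hLHS]
  rcases lt_trichotomy (x u) (x w) with h | h | h
  · have : |x u - x w| = x w - x u := by rw [abs_sub_comm]; exact abs_of_pos (by linarith)
    rw [this]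
    exact key_aux G x u w huw h
  · simp [h, sub_self, abs_zero]
    positivity
  · have : |x u - x w| = x u - x w := abs_of_pos (by linarith)
    rw [this]
    have := key_aux G x w u huw.symm h
    linarith
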